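/- arXiv:2207.08285 — 2 statements merged into one kernel-verified Lean document; each statement's English description precedes it below -/
import Mathlib

section
/- Let $(X,\mu)$ be a $\sigma$-finite measure space and let $T : L^2(X) \to L^2(X)$ be a bounded linear operator such that $T(\varphi \cdot f) = \varphi \cdot T(f)$ for every $\varphi \in L^\infty(X)$ and every $f \in L^2(X)$. Then there exists $\theta \in L^\infty(X)$ such that $T(f) = \theta \cdot f$ for every $f \in L^2(X)$. -/
open MeasureTheory

theorem stmt_1 {X : Type*} [MeasurableSpace X] (μ : Measure X) [SigmaFinite μ]
    (T : Lp ℂ 2 μ →L[ℂ] Lp ℂ 2 μ)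
    (hT : ∀ (φ : X → ℂ), MemLp φ ⊤ μ →
      ∀ f g : Lp ℂ 2 μ,
        (g : X → ℂ) =ᵐ[μ] (fun x => φ x * (f : X → ℂ) x) →
        (T g : X → ℂ) =ᵐ[μ] (fun x => φ x * (T f : X → ℂ) x)) :
    ∃ θ : X → ℂ, MemLp θ ⊤ μ ∧
      ∀ f : Lp ℂ 2 μ, (T f : X → ℂ) =ᵐ[μ] fun x => θ x * (f : X → ℂ) x := by
  classical
  obtain ⟨w, hw_pos, hw_meas, hw_int⟩ :=
    exists_pos_lintegral_lt_of_sigmaFinite μ (ε := 1) one_ne_zero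
  -- a positive bounded L² weight
  set g : X → ℝ := fun x => min (w x : ℝ) 1 with hg_def
  have hg_pos : ∀ x, 0 < g x := fun x => lt_min (hw_pos x) one_pos
  have hg_le_one : ∀ x, g x ≤ 1 := fun x => min_le_right _ _
  have hg_meas : Measurable g := (hw_meas.coe_nnreal_real).min measurable_const
  set gC : X → ℂ := fun x => (g x : ℂ) with hgC_def
  have hgC_meas : Measurable gC := Complex.measurable_ofReal.comp hg_meas
  have hgC_ne : ∀ x, gC x ≠ 0 := fun x => by
    simpa [hgC_def, Complex.ofReal_eq_zero] using (hg_pos x).ne'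
  have hgC_norm : ∀ x, ‖gC x‖ = g x := fun x => by
    simp [hgC_def, Complex.norm_real, abs_of_pos (hg_pos x)]
  have hgC2 : MemLp gC 2 μ := by
    rw [memLp_two_iff_integrable_sq_norm hgC_meas.aestronglyMeasurable]
    refine ⟨(hgC_meas.norm.pow_const 2).aestronglyMeasurable, ?_⟩
    refine lt_of_le_of_lt (lt_of_le_of_lt (lintegral_mono fun x => ?_) hw_int).le ENNReal.one_lt_top
    have h1 : ‖gC x‖ ^ 2 ≤ g x := by
      rw [hgC_norm x]
      calc g x ^ 2 ≤ g x * 1 := by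
            rw [sq]; exact mul_le_mul_of_nonneg_left (hg_le_one x) (hg_pos x).le
        _ = g x := mul_one _
    calc (‖‖gC x‖ ^ 2‖₊ : ENNReal) = ENNReal.ofReal (‖gC x‖ ^ 2) := by
          rw [ENNReal.ofReal, Real.toNNReal_eq_nnnorm_of_nonneg (sq_nonneg _)]
      _ ≤ ENNReal.ofReal (g x) := ENNReal.ofReal_le_ofReal h1
      _ ≤ (w x : ENNReal) := by
          rw [show ((w x : ENNReal)) = ENNReal.ofReal (w x : ℝ) by
            simp [ENNReal.ofReal_coe_nnreal]]
          exact ENNReal.ofReal_le_ofReal (min_le_left _ _)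
  set G : Lp ℂ 2 μ := hgC2.toLp gC with hG_def
  have hG : (G : X → ℂ) =ᵐ[μ] gC := MemLp.coeFn_toLp hgC2
  set HF : X → ℂ := (T G : X → ℂ) with hHF_def
  have hHF_meas : StronglyMeasurable HF := Lp.stronglyMeasurable (T G)
  set θ : X → ℂ := fun x => HF x / gC x with hθ_def
  have hθ_meas : Measurable θ := hHF_meas.measurable.div hgC_meas
  have hθ_mul : ∀ x, θ x * gC x = HF x := fun x =>
    div_mul_cancel₀ _ (hgC_ne x)
  set C : ℝ := ‖T‖ + 1 with hC_def
  have hC_pos : 0 < C := by positivity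
  -- the bad set has measure zero
  have hA : μ {x | C < ‖θ x‖} = 0 := by
    by_contra hA0
    set A : Set X := {x | C < ‖θ x‖} with hA_def
    have hA_meas : MeasurableSet A := measurableSet_lt measurable_const hθ_meas.norm
    set φ : X → ℂ := A.indicator (fun _ => 1) with hφ_def
    have hφ_meas : Measurable φ := measurable_const.indicator hA_meas
    have hφ_top : MemLp φ ⊤ μ := by
      refine memLp_top_of_bound hφ_meas.aestronglyMeasurable 1
        (Filter.Eventually.of_forall fun x => ?_)
      rw [hφ_def]
      by_cases h : x ∈ A
      · rw [Set.indicator_of_mem h]; simp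
      · rw [Set.indicator_of_notMem h]; simp
    set v : X → ℂ := fun x => φ x * gC x with hv_def
    have hv_meas : Measurable v := hφ_meas.mul hgC_meas
    have hv2 : MemLp v 2 μ := by
      refine hgC2.of_le hv_meas.aestronglyMeasurable
        (Filter.Eventually.of_forall fun x => ?_)
      rw [hv_def]
      dsimp only
      rw [norm_mul]
      by_cases h : x ∈ A
      · rw [hφ_def, Set.indicator_of_mem h]; simp
      · rw [hφ_def, Set.indicator_of_notMem h]; simp [norm_nonneg]
    set vL := hv2.toLp v with hvL_def
    have hvL : (vL : X → ℂ) =ᵐ[μ] v := hv2.coeFn_toLp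
    have hTv := hT φ hφ_top G vL (by
      filter_upwards [hvL, hG] with x hx hGx
      rw [hx, hGx, hv_def])
    have hpt : ∀ᵐ x ∂μ, ‖((C : ℂ) • ((vL : X → ℂ))) x‖ ≤ ‖(T vL : X → ℂ) x‖ := by
      filter_upwards [hvL, hTv] with x hx htx
      rw [htx, Pi.smul_apply, hx, smul_eq_mul, hv_def]
      dsimp only
      by_cases h : x ∈ A
      · have hφx : φ x = 1 := by rw [hφ_def]; exact Set.indicator_of_mem h _
        have hθx : C < ‖θ x‖ := h
        rw [hφx, one_mul, one_mul]
        calc ‖(C : ℂ) * gC x‖ = C * g x := by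
              rw [norm_mul, hgC_norm x, Complex.norm_real, Real.norm_eq_abs,
                abs_of_pos hC_pos]
          _ ≤ ‖θ x‖ * g x := mul_le_mul_of_nonneg_right hθx.le (hg_pos x).le
          _ = ‖θ x * gC x‖ := by rw [norm_mul, hgC_norm x]
          _ = ‖HF x‖ := by rw [hθ_mul x]
      · have hφx : φ x = 0 := by rw [hφ_def]; exact Set.indicator_of_notMem h _
        rw [hφx, zero_mul, mul_zero, norm_zero, zero_mul]
        exact norm_nonneg _
    have hle : eLpNorm ((C : ℂ) • ((vL : X → ℂ))) 2 μ ≤ eLpNorm ((T vL : X → ℂ)) 2 μ :=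
      eLpNorm_mono_ae hpt
    have e1 : eLpNorm ((vL : X → ℂ)) 2 μ = (‖vL‖₊ : ENNReal) := by
      rw [Lp.nnnorm_def, ENNReal.coe_toNNReal (Lp.eLpNorm_ne_top vL)]
    have e2 : eLpNorm ((T vL : X → ℂ)) 2 μ = (‖T vL‖₊ : ENNReal) := by
      rw [Lp.nnnorm_def, ENNReal.coe_toNNReal (Lp.eLpNorm_ne_top (T vL))]
    rw [eLpNorm_const_smul, e1, e2, enorm_eq_nnnorm, ← ENNReal.coe_mul, ENNReal.coe_le_coe] at hle
    have hop : ‖T vL‖₊ ≤ ‖T‖₊ * ‖vL‖₊ := T.le_opNNNorm vL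
    have hvL0 : vL ≠ 0 := by
      intro h0
      have hz : v =ᵐ[μ] 0 := hvL.symm.trans (h0 ▸ Lp.coeFn_zero ℂ 2 μ)
      have hμz : μ {x | ¬ (v x = (0 : X → ℂ) x)} = 0 := hz
      refine hA0 (measure_mono_null ?_ hμz)
      intro x hx
      have hφx : φ x = 1 := by rw [hφ_def]; exact Set.indicator_of_mem hx _
      simp only [Set.mem_setOf_eq, hv_def, hφx, one_mul, Pi.zero_apply]
      exact hgC_ne x
    have hnz : 0 < ‖vL‖₊ := by
      rwa [pos_iff_ne_zero, ne_eq, nnnorm_eq_zero]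
    have hCle : ‖(C : ℂ)‖₊ ≤ ‖T‖₊ := le_of_mul_le_mul_right (hle.trans hop) hnz
    have hCle' : C ≤ ‖T‖ := by
      have := NNReal.coe_le_coe.mpr hCle
      rwa [coe_nnnorm, coe_nnnorm, Complex.norm_real, Real.norm_eq_abs,
        abs_of_pos hC_pos] at this
    rw [hC_def] at hCle'
    linarith
  have hθ_top : MemLp θ ⊤ μ := by
    refine memLp_top_of_bound hθ_meas.aestronglyMeasurable C ?_
    have : ∀ᵐ x ∂μ, ¬ (C < ‖θ x‖) := (ae_iff).2 (by simpa using hA)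
    filter_upwards [this] with x hx
    exact not_lt.mp hx
  refine ⟨θ, hθ_top, fun f => ?_⟩
  set F : X → ℂ := (f : X → ℂ) with hF_def
  have hF_meas : StronglyMeasurable F := Lp.stronglyMeasurable f
  have hmain : ∀ n : ℕ, ∀ᵐ x ∂μ,
      (if ‖F x‖ ≤ n * g x then (T f : X → ℂ) x else 0)
        = (if ‖F x‖ ≤ n * g x then θ x * F x else 0) := by
    intro n
    have hs_meas : MeasurableSet {x | ‖F x‖ ≤ n * g x} :=
      measurableSet_le hF_meas.measurable.norm (measurable_const.mul hg_meas)
    set ψ : X → ℂ := fun x => if ‖F x‖ ≤ n * g x then (1 : ℂ) else 0 with hψ_def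
    have hψ_meas : Measurable ψ := Measurable.ite hs_meas measurable_const measurable_const
    have hψ_top : MemLp ψ ⊤ μ := by
      refine memLp_top_of_bound hψ_meas.aestronglyMeasurable 1
        (Filter.Eventually.of_forall fun x => ?_)
      rw [hψ_def]
      dsimp only
      split_ifs <;> simp
    set φ : X → ℂ := fun x => if ‖F x‖ ≤ n * g x then F x / gC x else 0 with hφ_def
    have hφ_meas : Measurable φ :=
      Measurable.ite hs_meas (hF_meas.measurable.div hgC_meas) measurable_const
    have hφ_top : MemLp φ ⊤ μ := by
      refine memLp_top_of_bound hφ_meas.aestronglyMeasurable n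
        (Filter.Eventually.of_forall fun x => ?_)
      rw [hφ_def]
      dsimp only
      split_ifs with h
      · rw [norm_div, hgC_norm x]
        exact (div_le_iff₀ (hg_pos x)).2 h
      · simpa using Nat.cast_nonneg (α := ℝ) n
    set u : X → ℂ := fun x => if ‖F x‖ ≤ n * g x then F x else 0 with hu_def
    have hu_meas : Measurable u := Measurable.ite hs_meas hF_meas.measurable measurable_const
    have hu2 : MemLp u 2 μ := by
      refine (Lp.memLp f).of_le hu_meas.aestronglyMeasurable
        (Filter.Eventually.of_forall fun x => ?_)
      rw [hu_def]
      dsimp only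
      split_ifs with h
      · exact le_refl _
      · simp
    set un := hu2.toLp u with hun_def
    have hun : (un : X → ℂ) =ᵐ[μ] u := hu2.coeFn_toLp
    have h1 := hT ψ hψ_top f un (by
      filter_upwards [hun] with x hx
      rw [hx, hu_def, hψ_def]
      dsimp only
      split_ifs with h
      · rw [one_mul]
      · rw [zero_mul])
    have h2 := hT φ hφ_top G un (by
      filter_upwards [hun, hG] with x hx hGx
      rw [hx, hGx, hu_def, hφ_def]
      dsimp only
      split_ifs with h
      · rw [div_mul_cancel₀ _ (hgC_ne x)]
      · rw [zero_mul])
    filter_upwards [h1, h2] with x hx1 hx2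
    have key : ψ x * (T f : X → ℂ) x = φ x * HF x := hx1.symm.trans hx2
    rw [hψ_def, hφ_def] at key
    dsimp only at key
    split_ifs with h
    · rw [if_pos h, if_pos h, one_mul] at key
      rw [key, ← hθ_mul x]
      calc F x / gC x * (θ x * gC x) = θ x * (F x / gC x * gC x) := by ring
        _ = θ x * F x := by rw [div_mul_cancel₀ _ (hgC_ne x)]
    · rfl
  have hae : ∀ᵐ x ∂μ, ∀ n : ℕ,
      (if ‖F x‖ ≤ n * g x then (T f : X → ℂ) x else 0)
        = (if ‖F x‖ ≤ n * g x then θ x * F x else 0) := ae_all_iff.2 hmain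
  filter_upwards [hae] with x hx
  obtain ⟨n, hn⟩ : ∃ n : ℕ, ‖F x‖ ≤ n * g x := by
    obtain ⟨n, hn⟩ := exists_nat_ge (‖F x‖ / g x)
    exact ⟨n, (div_le_iff₀ (hg_pos x)).mp hn⟩
  have := hx n
  rw [if_pos hn, if_pos hn] at this
  exact this
end

section
/- Let $H$ be a separable Hilbert space and let $(U_s)_{s \in \mathbb{R}}$ be a one-parameter group of unitary operators on $H$ (i.e. $U_{s+s'} = U_s U_{s'}$ and $U_0 = \mathrm{id}$) such that for all $f, g \in H$ the map $s \mapsto \langle U_s f, g \rangle$ is measurable. Then $(U_s)$ is strongly continuous. -/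
open MeasureTheory Filter Topology
open scoped ENNReal

private lemma aux_measurable {H : Type*} [NormedAddCommGroup H] [InnerProductSpace ℂ H]
    [TopologicalSpace.SeparableSpace H] [mH : MeasurableSpace H] [BorelSpace H]
    {u : ℝ → H} (hn : ∀ s, ‖u s‖ = ‖u 0‖)
    (h : ∀ g : H, Measurable fun s => (inner ℂ (u s) g : ℂ)) : Measurable u := by
  haveI : SecondCountableTopology H := UniformSpace.secondCountable_of_separable H
  have hbasis : TopologicalSpace.IsTopologicalBasis
      {s : Set H | ∃ x : H, ∃ r : ℝ, s = Metric.ball x r} := by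
    apply TopologicalSpace.isTopologicalBasis_of_isOpen_of_nhds
    · rintro t ⟨x, r, rfl⟩; exact Metric.isOpen_ball
    · intro a t ha ht
      rcases Metric.isOpen_iff.1 ht a ha with ⟨r, hr, hsub⟩
      exact ⟨Metric.ball a r, ⟨a, r, rfl⟩, Metric.mem_ball_self hr, hsub⟩
  have hB : mH =
      MeasurableSpace.generateFrom {s : Set H | ∃ x : H, ∃ r : ℝ, s = Metric.ball x r} := by
    rw [BorelSpace.measurable_eq (α := H), hbasis.borel_eq_generateFrom]
  have key : Measurable[_, MeasurableSpace.generateFrom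
      {s : Set H | ∃ x : H, ∃ r : ℝ, s = Metric.ball x r}] u := by
    apply measurable_generateFrom
    rintro t ⟨x, r, rfl⟩
    have hm : Measurable fun s => ‖u s - x‖ := by
      have h1 : Measurable fun s => RCLike.re (inner ℂ (u s) x : ℂ) :=
        RCLike.measurable_re.comp (h x)
      have heq : (fun s => ‖u s - x‖) =
          fun s => Real.sqrt (‖u 0‖ ^ 2 - 2 * RCLike.re (inner ℂ (u s) x : ℂ) + ‖x‖ ^ 2) := by
        funext s
        rw [← Real.sqrt_sq (norm_nonneg (u s - x)), norm_sub_sq (𝕜 := ℂ), hn s]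
      rw [heq]
      exact Real.continuous_sqrt.measurable.comp
        ((measurable_const.sub (h1.const_mul 2)).add measurable_const)
    have hpre : u ⁻¹' Metric.ball x r = {s | ‖u s - x‖ < r} := by
      ext s; simp [Metric.mem_ball, dist_eq_norm]
    rw [hpre]
    exact measurableSet_lt hm measurable_const
  exact hB ▸ key

private lemma aux_tendsto {H : Type*} [NormedAddCommGroup H] [InnerProductSpace ℂ H]
    [CompleteSpace H] [TopologicalSpace.SeparableSpace H]
    (U : ℝ → H →L[ℂ] H)
    (hiso : ∀ (s : ℝ) (f : H), ‖U s f‖ = ‖f‖)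
    (hgrp : ∀ s s' : ℝ, U (s + s') = (U s).comp (U s'))
    (h0 : U 0 = ContinuousLinearMap.id ℂ H)
    (hmeas : ∀ f g : H, Measurable fun s : ℝ => (inner ℂ (U s f) g : ℂ))
    (g : H) : Tendsto (fun s : ℝ => ‖U s g - g‖) (𝓝 0) (𝓝 0) := by
  letI : MeasurableSpace H := borel H
  haveI : BorelSpace H := ⟨rfl⟩
  haveI : SecondCountableTopology H := UniformSpace.secondCountable_of_separable H
  set u : ℝ → H := fun s => U s g with hu
  have hU0 : ∀ x : H, U 0 x = x := fun x => by rw [h0]; rfl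
  have hnu : ∀ s, ‖u s‖ = ‖g‖ := fun s => by simp only [hu, hiso]
  have hnormu : ∀ s, ‖u s‖ = ‖u 0‖ := fun s => by rw [hnu s, hnu 0]
  have humeas : Measurable u := aux_measurable hnormu (fun x => hmeas g x)
  have husm : StronglyMeasurable u := humeas.stronglyMeasurable
  set v : ℝ → H := Set.indicator (Set.Icc (-1 : ℝ) 2) u with hv
  have hvi : Integrable v := by
    apply IntegrableOn.integrable_indicator _ measurableSet_Icc
    apply Measure.integrableOn_of_bounded (M := ‖g‖)
    · rw [Real.volume_Icc]; exact ENNReal.ofReal_ne_top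
    · exact husm.aestronglyMeasurable
    · filter_upwards with t using le_of_eq (hnu t)
  haveI : Fact ((1 : ℝ≥0∞) ≤ 1) := ⟨le_rfl⟩
  set Vlp : Lp H 1 (volume : Measure ℝ) := hvi.toL1 v with hVlp
  set φ : ℝ → ContinuousMap ℝ ℝ := fun s => ContinuousMap.mk (fun t => t + s) (by continuity) with hφ
  have hφm : ∀ s, MeasurePreserving (φ s) (volume : Measure ℝ) volume := fun s =>
    measurePreserving_add_right volume s
  have hφc : Continuous φ :=
    ContinuousMap.continuous_of_continuous_uncurry _ (continuous_snd.add continuous_fst)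
  have hT : Tendsto (fun s => Lp.compMeasurePreserving (φ s) (hφm s) Vlp) (𝓝 0)
      (𝓝 (Lp.compMeasurePreserving (φ 0) (hφm 0) Vlp)) :=
    Tendsto.compMeasurePreservingLp tendsto_const_nhds (hφc.tendsto 0) hφm (hφm 0)
      ENNReal.one_ne_top
  have hTn : Tendsto (fun s => ‖Lp.compMeasurePreserving (φ s) (hφm s) Vlp
      - Lp.compMeasurePreserving (φ 0) (hφm 0) Vlp‖) (𝓝 0) (𝓝 0) := by
    have h' := (hT.sub (tendsto_const_nhds
      (x := Lp.compMeasurePreserving (φ 0) (hφm 0) Vlp))).norm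
    simpa using h'
  have hIeq : ∀ s : ℝ, (∫ t, ‖v (t + s) - v t‖) = ‖Lp.compMeasurePreserving (φ s) (hφm s) Vlp
      - Lp.compMeasurePreserving (φ 0) (hφm 0) Vlp‖ := by
    intro s
    rw [L1.norm_eq_integral_norm]
    refine integral_congr_ae ?_
    have h1 := Lp.coeFn_compMeasurePreserving Vlp (hφm s)
    have h2 := Lp.coeFn_compMeasurePreserving Vlp (hφm 0)
    have h3 := Lp.coeFn_sub (Lp.compMeasurePreserving (φ s) (hφm s) Vlp)
      (Lp.compMeasurePreserving (φ 0) (hφm 0) Vlp)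
    have h4 : (Vlp : ℝ → H) =ᵐ[volume] v := hvi.coeFn_toL1
    have h5 : ((Vlp : ℝ → H) ∘ (φ s)) =ᵐ[volume] (v ∘ (φ s)) :=
      (hφm s).quasiMeasurePreserving.ae_eq_comp h4
    have h6 : ((Vlp : ℝ → H) ∘ (φ 0)) =ᵐ[volume] (v ∘ (φ 0)) :=
      (hφm 0).quasiMeasurePreserving.ae_eq_comp h4
    filter_upwards [h1, h2, h3, h5, h6] with t ht1 ht2 ht3 ht5 ht6
    rw [ht3, Pi.sub_apply, ht1, ht2, ht5, ht6]
    simp only [Function.comp_apply, hφ, ContinuousMap.coe_mk, add_zero]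
  have htI : Tendsto (fun s : ℝ => ∫ t, ‖v (t + s) - v t‖) (𝓝 0) (𝓝 0) :=
    hTn.congr (fun s => (hIeq s).symm)
  -- inner ℂ products preserved
  have hinner : ∀ (t : ℝ) (x y : H), (inner ℂ (U t x) (U t y) : ℂ) = inner ℂ x y := fun t x y =>
    LinearIsometry.inner_map_map ⟨(U t : H →ₗ[ℂ] H), hiso t⟩ x y
  have hconst : ∀ s t : ℝ, (inner ℂ (u (t + s) - u t) (u t) : ℂ)
      = (inner ℂ (U s g) g : ℂ) - inner ℂ g g := by
    intro s t
    rw [inner_sub_left]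
    have hts : u (t + s) = U t (U s g) := by
      simp only [hu]; rw [hgrp t s]; rfl
    rw [hts]
    simp only [hu]
    rw [hinner t (U s g) g, hinner t g g]
  have hbound : ∀ s : ℝ, s ∈ Set.Icc (-1 : ℝ) 1 →
      ‖(inner ℂ (U s g) g : ℂ) - inner ℂ g g‖ ≤ (∫ t, ‖v (t + s) - v t‖) * ‖g‖ := by
    intro s hs
    have hsm : ∀ t ∈ Set.Icc (0 : ℝ) 1,
        ‖(inner ℂ (U s g) g : ℂ) - inner ℂ g g‖ ≤ ‖u (t + s) - u t‖ * ‖g‖ := by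
      intro t _
      rw [← hconst s t]
      calc ‖(inner ℂ (u (t + s) - u t) (u t) : ℂ)‖
          ≤ ‖u (t + s) - u t‖ * ‖u t‖ := norm_inner_le_norm _ _
        _ = ‖u (t + s) - u t‖ * ‖g‖ := by rw [hnu t]
    have h1 : ‖(inner ℂ (U s g) g : ℂ) - inner ℂ g g‖ =
        ∫ _ in Set.Icc (0 : ℝ) 1, ‖(inner ℂ (U s g) g : ℂ) - inner ℂ g g‖ := by
      rw [setIntegral_const, Measure.real, Real.volume_Icc]
      norm_num
    have hInt2 : IntegrableOn (fun t => ‖u (t + s) - u t‖ * ‖g‖) (Set.Icc (0 : ℝ) 1) := by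
      apply Measure.integrableOn_of_bounded (M := 2 * ‖g‖ * ‖g‖)
      · rw [Real.volume_Icc]; exact ENNReal.ofReal_ne_top
      · exact ((((humeas.comp (measurable_id.add_const s)).sub humeas).norm).mul_const
          _).aestronglyMeasurable
      · filter_upwards with t
        have hb : ‖u (t + s) - u t‖ ≤ 2 * ‖g‖ := by
          calc ‖u (t + s) - u t‖ ≤ ‖u (t + s)‖ + ‖u t‖ := norm_sub_le _ _
            _ = 2 * ‖g‖ := by rw [hnu, hnu]; ring
        have : ‖u (t + s) - u t‖ * ‖g‖ ≤ 2 * ‖g‖ * ‖g‖ := by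
          apply mul_le_mul_of_nonneg_right hb (norm_nonneg g)
        calc ‖‖u (t + s) - u t‖ * ‖g‖‖ = ‖u (t + s) - u t‖ * ‖g‖ := by
              rw [Real.norm_of_nonneg (by positivity)]
          _ ≤ 2 * ‖g‖ * ‖g‖ := this
    have hInt3 : Integrable fun t => ‖v (t + s) - v t‖ :=
      ((hvi.comp_add_right s).sub hvi).norm
    have huv : ∀ t ∈ Set.Icc (0 : ℝ) 1, ‖u (t + s) - u t‖ * ‖g‖ = ‖v (t + s) - v t‖ * ‖g‖ := by
      intro t ht
      obtain ⟨hs1, hs2⟩ := hs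
      obtain ⟨ht1, ht2⟩ := ht
      have e1 : v (t + s) = u (t + s) :=
        Set.indicator_of_mem (by constructor <;> linarith) u
      have e2 : v t = u t := Set.indicator_of_mem (by constructor <;> linarith) u
      rw [e1, e2]
    rw [h1]
    calc (∫ _ in Set.Icc (0 : ℝ) 1, ‖(inner ℂ (U s g) g : ℂ) - inner ℂ g g‖)
        ≤ ∫ t in Set.Icc (0 : ℝ) 1, ‖u (t + s) - u t‖ * ‖g‖ :=
          setIntegral_mono_on
            ((integrableOn_const_iff (C := ‖(inner ℂ (U s g) g : ℂ) - inner ℂ g g‖)).2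
              (Or.inr (by rw [Real.volume_Icc]; exact ENNReal.ofReal_lt_top)))
            hInt2 measurableSet_Icc hsm
      _ = ∫ t in Set.Icc (0 : ℝ) 1, ‖v (t + s) - v t‖ * ‖g‖ :=
          setIntegral_congr_fun measurableSet_Icc huv
      _ = (∫ t in Set.Icc (0 : ℝ) 1, ‖v (t + s) - v t‖) * ‖g‖ := by
          rw [integral_mul_const]
      _ ≤ (∫ t, ‖v (t + s) - v t‖) * ‖g‖ := by
          apply mul_le_mul_of_nonneg_right _ (norm_nonneg g)
          exact setIntegral_le_integral hInt3
            (Eventually.of_forall fun t => norm_nonneg _)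
  have hwk : Tendsto (fun s : ℝ => (inner ℂ (U s g) g : ℂ)) (𝓝 0) (𝓝 (inner ℂ g g)) := by
    rw [tendsto_iff_norm_sub_tendsto_zero]
    apply squeeze_zero' (Eventually.of_forall fun s => norm_nonneg _)
    · filter_upwards [Icc_mem_nhds (show (-1 : ℝ) < 0 by norm_num)
        (show (0 : ℝ) < 1 by norm_num)] with s hs using hbound s hs
    · simpa using htI.mul_const ‖g‖
  have h2 : Tendsto (fun s : ℝ => ‖U s g - g‖ ^ 2) (𝓝 0) (𝓝 0) := by
    have hre : Tendsto (fun s : ℝ => RCLike.re (inner ℂ (U s g) g : ℂ)) (𝓝 0)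
        (𝓝 (RCLike.re (inner ℂ g g : ℂ))) := (RCLike.continuous_re.tendsto _).comp hwk
    have hh : Tendsto (fun s : ℝ => 2 * ‖g‖ ^ 2 - 2 * RCLike.re (inner ℂ (U s g) g : ℂ)) (𝓝 0)
        (𝓝 (2 * ‖g‖ ^ 2 - 2 * RCLike.re (inner ℂ g g : ℂ))) :=
      tendsto_const_nhds.sub (hre.const_mul 2)
    rw [inner_self_eq_norm_sq] at hh
    have hlim : (2 * ‖g‖ ^ 2 - 2 * ‖g‖ ^ 2 : ℝ) = 0 := by ring
    rw [hlim] at hh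
    refine hh.congr fun s => ?_
    rw [norm_sub_sq (𝕜 := ℂ), hiso]
    ring
  have h3 := (Real.continuous_sqrt.tendsto 0).comp h2
  rw [Real.sqrt_zero] at h3
  exact h3.congr fun s => by
    simp only [Function.comp_apply]; exact Real.sqrt_sq (norm_nonneg _)

theorem stmt_4 {H : Type*} [NormedAddCommGroup H] [InnerProductSpace ℂ H] [CompleteSpace H]
    [TopologicalSpace.SeparableSpace H]
    (U : ℝ → H →L[ℂ] H)
    (hiso : ∀ (s : ℝ) (f : H), ‖U s f‖ = ‖f‖)
    (hgrp : ∀ s s' : ℝ, U (s + s') = (U s).comp (U s'))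
    (h0 : U 0 = ContinuousLinearMap.id ℂ H)
    (hmeas : ∀ f g : H, Measurable fun s : ℝ => (inner ℂ (U s f) g : ℂ)) :
    ∀ f : H, Continuous fun s : ℝ => U s f := by
  intro f
  rw [continuous_iff_continuousAt]
  intro s₀
  have key := aux_tendsto U hiso hgrp h0 hmeas (U s₀ f)
  unfold ContinuousAt
  rw [tendsto_iff_norm_sub_tendsto_zero]
  have heq : ∀ s : ℝ, ‖U s f - U s₀ f‖ = ‖U (s - s₀) (U s₀ f) - U s₀ f‖ := by
    intro s
    have h : U s f = U (s - s₀) (U s₀ f) := by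
      conv_lhs => rw [show s = (s - s₀) + s₀ by ring]
      rw [hgrp]; rfl
    rw [h]
  have hts : Tendsto (fun s : ℝ => s - s₀) (𝓝 s₀) (𝓝 0) := by
    have h' : Tendsto (fun s : ℝ => s - s₀) (𝓝 s₀) (𝓝 (s₀ - s₀)) :=
      tendsto_id.sub tendsto_const_nhds
    simpa using h'
  exact (key.comp hts).congr fun s => (heq s).symm
end
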